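/- Let 0 < ε < 1 and define m_k = (-1)^k · k^{-ε} for k ≥ 1 (and m_0 = 0). Then the quantity sup_n ( ∑_{k=n}^{2n} |(k+1)·(m_k - m_{k+1})|^q / (k+1) )^{1/q} is infinite for every q ≥ 1; that is, the sums ∑_{k=n}^{2n} (k+1)^{q-1} |m_k - m_{k+1}|^q are unbounded in n. -/

import Mathlib

theorem alternating_seq_unbounded_sums (ε : ℝ) (hε0 : 0 < ε) (hε1 : ε < 1)
    (m : ℕ → ℝ) (hm0 : m 0 = 0)
    (hm : ∀ k : ℕ, 1 ≤ k → m k = (-1 : ℝ) ^ k * (k : ℝ) ^ (-ε)) :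
    ∀ q : ℝ, 1 ≤ q → ∀ C : ℝ, ∃ n : ℕ,
      C < ∑ k ∈ Finset.Icc n (2 * n), ((k : ℝ) + 1) ^ (q - 1) * |m k - m (k + 1)| ^ q := by
  intro q hq C
  have hq0 : (0:ℝ) < q := lt_of_lt_of_le one_pos hq
  set a : ℝ := q * (1 - ε) - 1 with ha
  have ha' : -1 < a := by nlinarith
  -- key pointwise bound
  have key : ∀ k : ℕ, 1 ≤ k →
      ((k:ℝ)+1) ^ a ≤ ((k : ℝ) + 1) ^ (q - 1) * |m k - m (k + 1)| ^ q := by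
    intro k hk
    have hk1 : (0:ℝ) < (k:ℝ) + 1 := by positivity
    have hdiff : ((k:ℝ)+1) ^ (-ε) ≤ |m k - m (k + 1)| := by
      rw [hm k hk, hm (k+1) (by omega)]
      have hcast : ((k+1 : ℕ) : ℝ) = (k:ℝ) + 1 := by push_cast; ring
      rw [hcast, pow_succ]
      have : (-1:ℝ) ^ k * (k:ℝ) ^ (-ε) - (-1:ℝ) ^ k * -1 * ((k:ℝ)+1) ^ (-ε)
          = (-1:ℝ) ^ k * ((k:ℝ) ^ (-ε) + ((k:ℝ)+1) ^ (-ε)) := by ring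
      rw [this, abs_mul, abs_pow, abs_neg, abs_one, one_pow, one_mul,
        abs_of_nonneg (by positivity)]
      have : (0:ℝ) ≤ (k:ℝ) ^ (-ε) := Real.rpow_nonneg (Nat.cast_nonneg k) _
      linarith
    have h1 : (((k:ℝ)+1) ^ (-ε)) ^ q ≤ |m k - m (k + 1)| ^ q :=
      Real.rpow_le_rpow (by positivity) hdiff hq0.le
    have h2 : (((k:ℝ)+1) ^ (-ε)) ^ q = ((k:ℝ)+1) ^ (-ε * q) := by
      rw [← Real.rpow_mul hk1.le]
    calc ((k:ℝ)+1) ^ a = ((k:ℝ)+1) ^ (q - 1) * ((k:ℝ)+1) ^ (-ε * q) := by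
          rw [← Real.rpow_add hk1, ha]; ring_nf
      _ ≤ ((k:ℝ)+1) ^ (q - 1) * |m k - m (k + 1)| ^ q := by
          rw [← h2]
          exact mul_le_mul_of_nonneg_left h1 (by positivity)
  have hsum : ∀ n : ℕ, 1 ≤ n →
      ∑ k ∈ Finset.Icc n (2*n), ((k:ℝ)+1) ^ a
        ≤ ∑ k ∈ Finset.Icc n (2 * n), ((k : ℝ) + 1) ^ (q - 1) * |m k - m (k + 1)| ^ q := by
    intro n hn
    refine Finset.sum_le_sum fun k hk => key k ?_
    have := (Finset.mem_Icc.mp hk).1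
    omega
  rcases le_or_gt 0 a with hA | hA
  · -- a ≥ 0 : each term ≥ 1, sum ≥ n + 1
    obtain ⟨n, hn⟩ := exists_nat_gt C
    refine ⟨n + 1, lt_of_lt_of_le ?_ (hsum (n+1) (by omega))⟩
    have hcard : (Finset.Icc (n+1) (2*(n+1))).card = n + 2 := by
      rw [Nat.card_Icc]; omega
    have : ∀ k ∈ Finset.Icc (n+1) (2*(n+1)), (1:ℝ) ≤ ((k:ℝ)+1) ^ a := by
      intro k _
      exact Real.one_le_rpow (by push_cast; linarith [Nat.cast_nonneg (α := ℝ) k]) hA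
    calc C < (n:ℝ) + 2 := by linarith
      _ = ∑ _k ∈ Finset.Icc (n+1) (2*(n+1)), (1:ℝ) := by
          rw [Finset.sum_const, hcard]; push_cast; ring
      _ ≤ ∑ k ∈ Finset.Icc (n+1) (2*(n+1)), ((k:ℝ)+1) ^ a := Finset.sum_le_sum this
  · -- a < 0
    have h1a : (0:ℝ) < 1 + a := by linarith
    set B : ℝ := (max (2*C) 1) ^ (1/(1+a)) with hB
    have hBpos : 0 < B := Real.rpow_pos_of_pos (lt_of_lt_of_le one_pos (le_max_right _ _)) _
    obtain ⟨n, hn⟩ := exists_nat_gt (max B 1)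
    have hn1 : 1 ≤ n := by
      by_contra h
      push_neg at h
      interval_cases n <;> simp_all <;> linarith [le_max_right B 1]
    refine ⟨n, lt_of_lt_of_le ?_ (hsum n hn1)⟩
    have h2n : (0:ℝ) < 2*(n:ℝ) + 1 := by positivity
    have hterm : ∀ k ∈ Finset.Icc n (2*n), (2*(n:ℝ)+1) ^ a ≤ ((k:ℝ)+1) ^ a := by
      intro k hk
      have hk2 := (Finset.mem_Icc.mp hk).2
      have : (k:ℝ) + 1 ≤ 2*(n:ℝ) + 1 := by
        have : (k:ℝ) ≤ 2*(n:ℝ) := by exact_mod_cast hk2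
        linarith
      exact Real.rpow_le_rpow_of_nonpos (by positivity) this hA.le
    have hcard : (Finset.Icc n (2*n)).card = n + 1 := by
      rw [Nat.card_Icc]; omega
    have hlb : ((n:ℝ)+1) * (2*(n:ℝ)+1) ^ a
        ≤ ∑ k ∈ Finset.Icc n (2*n), ((k:ℝ)+1) ^ a := by
      calc ((n:ℝ)+1) * (2*(n:ℝ)+1) ^ a
          = ∑ _k ∈ Finset.Icc n (2*n), (2*(n:ℝ)+1) ^ a := by
            rw [Finset.sum_const, hcard]; push_cast; ring
        _ ≤ _ := Finset.sum_le_sum hterm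
    have hBn : B < 2*(n:ℝ) + 1 := by
      have : B ≤ max B 1 := le_max_left _ _
      have hn' : max B 1 < (n:ℝ) := hn
      linarith [Nat.cast_nonneg (α := ℝ) n]
    have hpow : max (2*C) 1 < (2*(n:ℝ)+1) ^ (1+a) := by
      have := Real.rpow_lt_rpow hBpos.le hBn h1a
      rwa [hB, ← Real.rpow_mul (le_trans one_pos.le (le_max_right (2*C) 1)),
        one_div_mul_cancel (ne_of_gt h1a), Real.rpow_one] at this
    have hsplit : (2*(n:ℝ)+1) ^ (1+a) = (2*(n:ℝ)+1) * (2*(n:ℝ)+1) ^ a := by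
      rw [Real.rpow_add h2n, Real.rpow_one]
    have hposa : (0:ℝ) < (2*(n:ℝ)+1) ^ a := Real.rpow_pos_of_pos h2n _
    have hhalf : (2*(n:ℝ)+1) / 2 ≤ (n:ℝ) + 1 := by linarith
    have : 2*C < (2*(n:ℝ)+1) * (2*(n:ℝ)+1) ^ a := by
      rw [← hsplit]; exact lt_of_le_of_lt (le_max_left _ _) hpow
    calc C < (2*(n:ℝ)+1) / 2 * (2*(n:ℝ)+1) ^ a := by nlinarith
      _ ≤ ((n:ℝ)+1) * (2*(n:ℝ)+1) ^ a := by nlinarith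
      _ ≤ _ := hlb
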